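/- Let Λ be a rational lattice with ℤⁿ ⊆ Λ ⊆ (1/q)ℤⁿ for some positive integer q equal to the exact common denominator of Λ (the least q with q·Λ ⊆ ℤⁿ), and suppose the unit octahedron Oⁿ = {x : ‖x‖₁ ≤ 1} is admissible with respect to Λ. If q has s distinct prime factors, then s ≤ n. -/

import Mathlib

/-- Product of a finset of distinct odd numbers ≥ 3 is at least 2^k * k!. -/
lemma oddprod : ∀ (k : ℕ) (F : Finset ℕ), F.card = k →
    (∀ a ∈ F, 3 ≤ a ∧ a % 2 = 1) → 2 ^ k * k.factorial ≤ ∏ a ∈ F, a := by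
  intro k
  induction k with
  | zero =>
    intro F hF _
    rw [Finset.card_eq_zero] at hF
    subst hF; simp
  | succ k ih =>
    intro F hF hodd
    have hne : F.Nonempty := Finset.card_pos.mp (by omega)
    set M := F.max' hne with hMdef
    have hMF : M ∈ F := F.max'_mem hne
    have hM : 2 * k + 3 ≤ M := by
      by_contra hlt
      push_neg at hlt
      have hsub : F ⊆ (Finset.range k).image (fun i => 2 * i + 3) := by
        intro a ha
        have h1 := hodd a ha
        have h2 : a ≤ M := F.le_max' a ha
        refine Finset.mem_image.mpr ⟨(a - 3) / 2, Finset.mem_range.mpr ?_, ?_⟩ <;> omega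
      have hc1 := Finset.card_le_card hsub
      have hc2 := Finset.card_image_le (s := Finset.range k) (f := fun i => 2 * i + 3)
      rw [Finset.card_range] at hc2
      omega
    have herase : (F.erase M).card = k := by
      rw [Finset.card_erase_of_mem hMF, hF]
      omega
    have hIH := ih (F.erase M) herase (fun a ha => hodd a (Finset.mem_of_mem_erase ha))
    have hprod : ∏ a ∈ F, a = M * ∏ a ∈ F.erase M, a := (Finset.mul_prod_erase F _ hMF).symm
    rw [hprod]
    calc 2 ^ (k + 1) * (k + 1).factorial = (2 * (k + 1)) * (2 ^ k * k.factorial) := by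
          rw [pow_succ, Nat.factorial_succ]; ring
      _ ≤ M * ∏ a ∈ F.erase M, a := Nat.mul_le_mul (by omega) hIH

lemma twopowfac_mono {a b : ℕ} (h : a ≤ b) : 2 ^ a * a.factorial ≤ 2 ^ b * b.factorial :=
  Nat.mul_le_mul (Nat.pow_le_pow_right (by norm_num) h) (Nat.factorial_le h)

/-- A finset of at least n+1 primes has product at least 2^(n+1) * n!. -/
lemma primesprod {P : Finset ℕ} (hP : ∀ p ∈ P, p.Prime) {n : ℕ} (hn : n + 1 ≤ P.card) :
    2 ^ (n + 1) * n.factorial ≤ ∏ p ∈ P, p := by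
  by_cases h2 : 2 ∈ P
  · have hodd : ∀ a ∈ P.erase 2, 3 ≤ a ∧ a % 2 = 1 := by
      intro a ha
      have hne := Finset.ne_of_mem_erase ha
      have hp := hP a (Finset.mem_of_mem_erase ha)
      have h1 := hp.two_le
      have := hp.eq_one_or_self_of_dvd 2
      constructor
      · omega
      · rcases Nat.Prime.eq_two_or_odd hp with h | h
        · omega
        · exact h
    have hcard : (P.erase 2).card = P.card - 1 := Finset.card_erase_of_mem h2
    have h1 := oddprod (P.erase 2).card (P.erase 2) rfl hodd
    have h3 : 2 ^ n * n.factorial ≤ 2 ^ (P.erase 2).card * (P.erase 2).card.factorial :=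
      twopowfac_mono (by omega)
    calc 2 ^ (n + 1) * n.factorial = 2 * (2 ^ n * n.factorial) := by ring
      _ ≤ 2 * ∏ a ∈ P.erase 2, a := Nat.mul_le_mul_left 2 (h3.trans h1)
      _ = ∏ p ∈ P, p := Finset.mul_prod_erase P (fun x => x) h2
  · have hodd : ∀ a ∈ P, 3 ≤ a ∧ a % 2 = 1 := by
      intro a ha
      have hp := hP a ha
      have h1 := hp.two_le
      rcases Nat.Prime.eq_two_or_odd hp with h | h
      · exact absurd (h ▸ ha) h2
      · exact ⟨by omega, h⟩
    have h1 := oddprod P.card P rfl hodd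
    exact (Nat.mul_le_mul (Nat.pow_le_pow_right (by norm_num) (by omega))
      (Nat.factorial_le (by omega))).trans h1


/-- The integer lattice ℤⁿ viewed as a ℤ-submodule of ℚⁿ. -/
def intLattice (n : ℕ) : Submodule ℤ (Fin n → ℚ) :=
  Submodule.span ℤ (Set.range fun i => (Pi.single i 1 : Fin n → ℚ))

/-- if ℤⁿ ⊆ Λ ⊆ (1/q)ℤⁿ with q the exact common denominator of Λ and the
unit octahedron is admissible for Λ, then q has at most n distinct prime factors. -/
theorem stmt11 (n : ℕ) (Λ : Submodule ℤ (Fin n → ℚ)) (hZ : intLattice n ≤ Λ)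
    (q : ℕ) (hq0 : 0 < q)
    (hden : ∀ x ∈ Λ, ∀ i, ((q : ℚ) * x i).den = 1)
    (hmin : ∀ q' : ℕ, 0 < q' → (∀ x ∈ Λ, ∀ i, ((q' : ℚ) * x i).den = 1) → q ≤ q')
    (hadm : ∀ x ∈ Λ, (∑ i, |x i|) ≤ 1 →
      x = 0 ∨ ∃ i : Fin n, x = Pi.single i 1 ∨ x = -Pi.single i 1) :
    q.primeFactors.card ≤ n := by
  classical
  -- integer vectors lie in Λ
  have hint : ∀ c : Fin n → ℤ, (fun i => (c i : ℚ)) ∈ Λ := by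
    intro c
    have hrepr : (fun i => (c i : ℚ)) = ∑ i : Fin n, c i • (Pi.single i 1 : Fin n → ℚ) := by
      funext j
      rw [Finset.sum_apply]
      simp [Pi.single_apply]
    rw [hrepr]
    exact Submodule.sum_mem _ fun i _ =>
      Submodule.smul_mem _ _ (hZ (Submodule.subset_span ⟨i, rfl⟩))
  rcases Nat.eq_zero_or_pos n with hn0 | hn
  · subst hn0
    have hq1 : q ≤ 1 := hmin 1 one_pos (by intro x hx i; exact i.elim0)
    interval_cases q
    simp
  by_contra hcon
  push_neg at hcon
  have hcard : n + 1 ≤ q.primeFactors.card := hcon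
  have hqbig : 2 ^ (n + 1) * n.factorial ≤ q := by
    refine le_trans (primesprod (fun p hp => Nat.prime_of_mem_primeFactors hp) hcard) ?_
    exact Nat.le_of_dvd hq0 (Nat.prod_primeFactors_dvd q)
  have hq2 : 2 ≤ q := by
    have : 1 ≤ 2 ^ n * n.factorial := Nat.mul_pos (pow_pos (by norm_num) n)
      n.factorial_pos
    calc 2 ≤ 2 ^ (n+1) * n.factorial := by rw [pow_succ]; nlinarith
      _ ≤ q := hqbig
  haveI : NeZero q := ⟨by omega⟩
  have hqQ : (q : ℚ) ≠ 0 := by positivity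
  set r := q / 2 with hrdef
  -- the subgroup L of integer vectors a with a/q ∈ Λ
  set L : AddSubgroup (Fin n → ℤ) :=
    { carrier := {a | (fun i => (a i : ℚ) / (q : ℚ)) ∈ Λ}
      zero_mem' := by
        have : (fun i : Fin n => ((0 : Fin n → ℤ) i : ℚ) / (q : ℚ)) = 0 := by
          funext i; simp
        simp only [Set.mem_setOf_eq, this]
        exact Λ.zero_mem
      add_mem' := by
        intro a b ha hb
        simp only [Set.mem_setOf_eq] at *
        have h := Λ.add_mem ha hb
        have : (fun i => ((a + b) i : ℚ) / (q : ℚ)) =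
            (fun i => (a i : ℚ) / (q : ℚ)) + fun i => (b i : ℚ) / (q : ℚ) := by
          funext i; simp [Pi.add_apply]; push_cast; ring
        rw [this]; exact h
      neg_mem' := by
        intro a ha
        simp only [Set.mem_setOf_eq] at *
        have h := Λ.neg_mem ha
        have : (fun i => ((-a) i : ℚ) / (q : ℚ)) = -fun i => (a i : ℚ) / (q : ℚ) := by
          funext i; simp [Pi.neg_apply]; push_cast; ring
        rw [this]; exact h } with hLdef
  have hmemL : ∀ a : Fin n → ℤ, a ∈ L ↔ (fun i => (a i : ℚ) / (q : ℚ)) ∈ Λ := fun a => Iff.rfl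
  -- reduction homomorphism
  set R : (Fin n → ℤ) →+ (Fin n → ZMod q) :=
    { toFun := fun a i => ((a i : ℤ) : ZMod q)
      map_zero' := by funext i; simp
      map_add' := by intro a b; funext i; push_cast; simp } with hRdef
  set A : AddSubgroup (Fin n → ZMod q) := L.map R with hAdef
  haveI : Nonempty A := ⟨0⟩
  set cA := Nat.card A with hcAdef
  have hcA0 : 0 < cA := Nat.card_pos
  -- q ≤ cA by minimality
  have hqcA : q ≤ cA := by
    refine hmin cA hcA0 ?_
    intro x hx i
    set a : Fin n → ℤ := fun j => ((q : ℚ) * x j).num with hadef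
    have ha_eq : ∀ j, (a j : ℚ) = (q : ℚ) * x j := fun j =>
      (Rat.den_eq_one_iff _).mp (hden x hx j)
    have haL : a ∈ L := by
      rw [hmemL]
      have hax : (fun j => (a j : ℚ) / (q : ℚ)) = x := by
        funext j; rw [ha_eq j]; field_simp
      rw [hax]; exact hx
    have hw : R a ∈ A := ⟨a, haL, rfl⟩
    have hzero : cA • (⟨R a, hw⟩ : A) = 0 := card_nsmul_eq_zero'
    have hzero' : cA • (R a) = 0 := by
      have h := congrArg (Subtype.val) hzero
      simpa using h
    have hi : (((cA : ℤ) * a i : ℤ) : ZMod q) = 0 := by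
      have h := congrFun hzero' i
      simp only [Pi.smul_apply, Pi.zero_apply] at h
      have hRa : R a i = ((a i : ℤ) : ZMod q) := rfl
      rw [hRa] at h
      push_cast
      rw [← nsmul_eq_mul]
      exact_mod_cast h
    obtain ⟨c, hc⟩ := (ZMod.intCast_zmod_eq_zero_iff_dvd _ q).mp hi
    have hval : (cA : ℚ) * x i = (c : ℚ) := by
      have hx_i : x i = (a i : ℚ) / (q : ℚ) := by rw [ha_eq i]; field_simp
      rw [hx_i]
      have hcast : ((cA : ℤ) : ℚ) * ((a i : ℤ) : ℚ) = ((q : ℤ) : ℚ) * ((c : ℤ) : ℚ) := by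
        exact_mod_cast congrArg (fun z : ℤ => (z : ℚ)) hc
      push_cast at hcast ⊢
      field_simp
      linarith [hcast]
    rw [hval]; exact Rat.den_intCast c
  -- quotient counting
  set Q := (Fin n → ZMod q) ⧸ A with hQdef
  haveI : Finite Q := Quotient.finite _
  haveI : Fintype Q := Fintype.ofFinite Q
  have hQcard : Nat.card Q * cA = q ^ n := by
    have h1 := AddSubgroup.card_eq_card_quotient_mul_card_addSubgroup A
    have h2 : Nat.card (Fin n → ZMod q) = q ^ n := by
      rw [Nat.card_eq_fintype_card]
      simp [ZMod.card]
    rw [h2] at h1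
    exact h1.symm
  have hQle : Nat.card Q ≤ q ^ (n - 1) := by
    have hqpow : q ^ n = q ^ (n - 1) * q := by
      rw [← pow_succ]; congr 1; omega
    have := hQcard
    nlinarith [Nat.card_pos (α := Q), hqcA, hcA0]
  -- pigeonhole domain
  have hsymcard : Fintype.card (Sym (Fin (n + 1)) r) = (n + r).choose r := by
    rw [Sym.card_sym_eq_choose]
    congr 1
    rw [Fintype.card_fin]
    omega
  have hchoose : Fintype.card Q < Fintype.card (Sym (Fin (n + 1)) r) := by
    rw [hsymcard, ← Nat.card_eq_fintype_card]
    set C := (n + r).choose r with hCdef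
    have hCn : C = (r + n).choose n := by
      rw [hCdef, Nat.add_comm n r]
      exact Nat.choose_symm_add
    have h1 : (r + 1) ^ n ≤ (r + 1).ascFactorial n := Nat.pow_succ_le_ascFactorial (r + 1) n
    have h2 : r.factorial * (r + 1).ascFactorial n = (r + n).factorial :=
      Nat.factorial_mul_ascFactorial r n
    have h3 : (r + n).choose n * r.factorial * n.factorial = (r + n).factorial :=
      Nat.add_choose_mul_factorial_mul_factorial r n
    have hasc : (r + 1).ascFactorial n = (r + n).choose n * n.factorial := by
      have hrfpos : 0 < r.factorial := r.factorial_pos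
      apply Nat.eq_of_mul_eq_mul_left hrfpos
      rw [h2, ← h3]; ring
    set K := 2 ^ n * n.factorial with hKdef
    have hKpos : 0 < K := Nat.mul_pos (pow_pos (by norm_num) n) n.factorial_pos
    have hup : q ^ n ≤ K * C := by
      have hq2r : q ≤ 2 * (r + 1) := by omega
      calc q ^ n ≤ (2 * (r + 1)) ^ n := Nat.pow_le_pow_left hq2r n
        _ = 2 ^ n * (r + 1) ^ n := mul_pow 2 (r + 1) n
        _ ≤ 2 ^ n * ((r + 1).ascFactorial n) := Nat.mul_le_mul_left _ h1
        _ = 2 ^ n * ((r + n).choose n * n.factorial) := by rw [hasc]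
        _ = K * C := by rw [hKdef, hCn]; ring
    have hlow : 2 * K * q ^ (n - 1) ≤ q ^ n := by
      have hsplit : q ^ n = q ^ (n - 1) * q := by
        rw [← pow_succ]; congr 1; omega
      rw [hsplit]
      have : 2 * K ≤ q := by
        have : 2 ^ (n + 1) * n.factorial = 2 * K := by rw [hKdef]; ring
        omega
      calc 2 * K * q ^ (n - 1) = q ^ (n - 1) * (2 * K) := by ring
        _ ≤ q ^ (n - 1) * q := Nat.mul_le_mul_left _ this
    have h2C : 2 * q ^ (n - 1) ≤ C := by
      have : K * (2 * q ^ (n - 1)) ≤ K * C := by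
        calc K * (2 * q ^ (n - 1)) = 2 * K * q ^ (n - 1) := by ring
          _ ≤ q ^ n := hlow
          _ ≤ K * C := hup
      exact Nat.le_of_mul_le_mul_left this hKpos
    have hqpow1 : 1 ≤ q ^ (n - 1) := Nat.one_le_pow _ _ hq0
    omega
  obtain ⟨m₁, m₂, hmne, hmeq⟩ := Fintype.exists_ne_map_eq_of_card_lt
    (fun m : Sym (Fin (n + 1)) r =>
      (QuotientAddGroup.mk (R (fun i : Fin n => ((m : Multiset (Fin (n+1))).count i.castSucc : ℤ))) : Q))
    hchoose
  set X : Fin n → ℤ := fun i : Fin n => ((m₁ : Multiset (Fin (n + 1))).count i.castSucc : ℤ)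
    with hXdef
  set Y : Fin n → ℤ := fun i : Fin n => ((m₂ : Multiset (Fin (n + 1))).count i.castSucc : ℤ)
    with hYdef
  have hsubmem : R X - R Y ∈ A := (QuotientAddGroup.eq_iff_sub_mem).mp hmeq
  obtain ⟨a₀, ha₀L, ha₀eq⟩ := hsubmem
  have hR0 : ∀ i, (((X - Y - a₀) i : ℤ) : ZMod q) = 0 := by
    intro i
    have h : R (X - Y - a₀) = 0 := by
      rw [map_sub, map_sub, ha₀eq]
      abel
    exact congrFun h i
  have hdvd : ∀ i, ∃ ci : ℤ, (X - Y) i - a₀ i = (q : ℤ) * ci := by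
    intro i
    obtain ⟨ci, hci⟩ := (ZMod.intCast_zmod_eq_zero_iff_dvd ((X - Y - a₀) i) q).mp (hR0 i)
    exact ⟨ci, hci⟩
  choose c hc using hdvd
  set lam : Fin n → ℚ := fun i => (((X - Y) i : ℤ) : ℚ) / (q : ℚ) with hlamdef
  have hlamΛ : lam ∈ Λ := by
    have hdecomp : lam = (fun i => (a₀ i : ℚ) / (q : ℚ)) + (fun i => (c i : ℚ)) := by
      funext i
      have hci := hc i
      have : ((X - Y) i : ℤ) = a₀ i + (q : ℤ) * c i := by omega
      rw [hlamdef]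
      simp only [Pi.add_apply]
      rw [this]
      push_cast
      field_simp
    rw [hdecomp]
    exact Λ.add_mem ((hmemL a₀).mp ha₀L) (hint c)
  -- counts are bounded by r
  have hXle : ∀ i : Fin n, (m₁ : Multiset (Fin (n + 1))).count i.castSucc ≤ r := by
    intro i
    have h := Multiset.count_le_card i.castSucc (m₁ : Multiset (Fin (n + 1)))
    rwa [Sym.card_coe] at h
  have hYle : ∀ i : Fin n, (m₂ : Multiset (Fin (n + 1))).count i.castSucc ≤ r := by
    intro i
    have h := Multiset.count_le_card i.castSucc (m₂ : Multiset (Fin (n + 1)))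
    rwa [Sym.card_coe] at h
  -- sums of truncated counts are ≤ r
  have hsum1 : ∑ i : Fin n, (m₁ : Multiset (Fin (n + 1))).count i.castSucc ≤ r := by
    have htot : ∑ j : Fin (n + 1), (m₁ : Multiset (Fin (n + 1))).count j = r := by
      rw [Multiset.sum_count_eq_card (fun a _ => Finset.mem_univ a)]
      exact Sym.card_coe
    rw [Fin.sum_univ_castSucc] at htot
    omega
  have hsum2 : ∑ i : Fin n, (m₂ : Multiset (Fin (n + 1))).count i.castSucc ≤ r := by
    have htot : ∑ j : Fin (n + 1), (m₂ : Multiset (Fin (n + 1))).count j = r := by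
      rw [Multiset.sum_count_eq_card (fun a _ => Finset.mem_univ a)]
      exact Sym.card_coe
    rw [Fin.sum_univ_castSucc] at htot
    omega
  have hnorm : (∑ i, |lam i|) ≤ 1 := by
    have habs : ∀ i : Fin n, |lam i| = (|((X - Y) i : ℤ)| : ℚ) / (q : ℚ) := by
      intro i
      have hli : lam i = (((X - Y) i : ℤ) : ℚ) / (q : ℚ) := rfl
      rw [hli, abs_div, abs_of_pos (show (0:ℚ) < (q : ℚ) by positivity)]
    have hZbound : ∑ i : Fin n, |((X - Y) i : ℤ)| ≤ (q : ℤ) := by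
      have hterm : ∀ i : Fin n, |((X - Y) i : ℤ)| ≤ X i + Y i := by
        intro i
        have h1 : (0 : ℤ) ≤ X i := Int.natCast_nonneg _
        have h2 : (0 : ℤ) ≤ Y i := Int.natCast_nonneg _
        have h3 : (X - Y) i = X i - Y i := rfl
        rw [h3, abs_le]
        constructor <;> omega
      calc ∑ i : Fin n, |((X - Y) i : ℤ)| ≤ ∑ i : Fin n, (X i + Y i) :=
            Finset.sum_le_sum fun i _ => hterm i
        _ = (∑ i : Fin n, X i) + ∑ i : Fin n, Y i := Finset.sum_add_distrib
        _ ≤ (q : ℤ) := by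
            rw [hXdef, hYdef]
            push_cast
            have h1 : ((∑ i : Fin n, (m₁ : Multiset (Fin (n + 1))).count i.castSucc : ℕ) : ℤ)
              ≤ (r : ℤ) := by exact_mod_cast hsum1
            have h2 : ((∑ i : Fin n, (m₂ : Multiset (Fin (n + 1))).count i.castSucc : ℕ) : ℤ)
              ≤ (r : ℤ) := by exact_mod_cast hsum2
            push_cast at h1 h2
            have : 2 * (r : ℤ) ≤ (q : ℤ) := by exact_mod_cast (by omega : 2 * r ≤ q)
            linarith
    calc (∑ i, |lam i|) = (∑ i : Fin n, (|((X - Y) i : ℤ)| : ℚ)) / (q : ℚ) := by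
          rw [Finset.sum_div]
          exact Finset.sum_congr rfl fun i _ => habs i
      _ ≤ (q : ℚ) / (q : ℚ) := by
          apply div_le_div_of_nonneg_right ?_ (by positivity)
          · exact_mod_cast hZbound
      _ = 1 := div_self hqQ
  rcases hadm lam hlamΛ hnorm with hzero | ⟨j, hj⟩
  · -- lam = 0 : contradiction with m₁ ≠ m₂
    have hXY : ∀ i : Fin n, (m₁ : Multiset (Fin (n + 1))).count i.castSucc
        = (m₂ : Multiset (Fin (n + 1))).count i.castSucc := by
      intro i
      have h := congrFun hzero i
      rw [hlamdef] at h
      simp only [Pi.zero_apply] at h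
      have h2 : (((X - Y) i : ℤ) : ℚ) = 0 := by
        field_simp at h
        exact_mod_cast h
      have h3 : (X - Y) i = 0 := by exact_mod_cast h2
      simp only [Pi.sub_apply, hXdef, hYdef] at h3
      omega
    have hlast : (m₁ : Multiset (Fin (n + 1))).count (Fin.last n)
        = (m₂ : Multiset (Fin (n + 1))).count (Fin.last n) := by
      have htot1 : ∑ j : Fin (n + 1), (m₁ : Multiset (Fin (n + 1))).count j = r := by
        rw [Multiset.sum_count_eq_card (fun a _ => Finset.mem_univ a)]; exact Sym.card_coe
      have htot2 : ∑ j : Fin (n + 1), (m₂ : Multiset (Fin (n + 1))).count j = r := by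
        rw [Multiset.sum_count_eq_card (fun a _ => Finset.mem_univ a)]; exact Sym.card_coe
      rw [Fin.sum_univ_castSucc] at htot1 htot2
      have hs : ∑ i : Fin n, (m₁ : Multiset (Fin (n + 1))).count i.castSucc
          = ∑ i : Fin n, (m₂ : Multiset (Fin (n + 1))).count i.castSucc :=
        Finset.sum_congr rfl fun i _ => hXY i
      omega
    apply hmne
    apply Subtype.ext
    apply Multiset.ext.mpr
    intro j
    induction j using Fin.lastCases with
    | last => exact hlast
    | cast i => exact hXY i
  · -- lam = ± single j : impossible since |X j - Y j| ≤ r < q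
    have hcases : (X j : ℤ) - Y j = (q : ℤ) ∨ (X j : ℤ) - Y j = -(q : ℤ) := by
      rcases hj with hj | hj
      · left
        have h := congrFun hj j
        rw [Pi.single_eq_same] at h
        have h3 : (((X - Y) j : ℤ) : ℚ) / (q : ℚ) = 1 := h
        rw [div_eq_one_iff_eq hqQ] at h3
        have h4 : ((X - Y) j : ℤ) = (q : ℤ) := by exact_mod_cast h3
        have h5 : (X j : ℤ) - Y j = (X - Y) j := rfl
        rw [h5]; exact h4
      · right
        have h := congrFun hj j
        rw [Pi.neg_apply, Pi.single_eq_same] at h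
        have h3 : (((X - Y) j : ℤ) : ℚ) / (q : ℚ) = -1 := h
        rw [div_eq_iff hqQ] at h3
        have h4 : ((X - Y) j : ℤ) = -(q : ℤ) := by
          have : (((X - Y) j : ℤ) : ℚ) = -(q : ℚ) := by linarith [h3]
          exact_mod_cast this
        have h5 : (X j : ℤ) - Y j = (X - Y) j := rfl
        rw [h5]; exact h4
    have hXj : X j = ((m₁ : Multiset (Fin (n + 1))).count j.castSucc : ℤ) := rfl
    have hYj : Y j = ((m₂ : Multiset (Fin (n + 1))).count j.castSucc : ℤ) := rfl
    rw [hXj, hYj] at hcases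
    have hXjle := hXle j
    have hYjle := hYle j
    omega
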